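/- arXiv:1603.02727 — 2 statements merged into one kernel-verified Lean document; each statement's English description precedes it below -/
import Mathlib

section
/- In dimension d = 2: let P_q be a query point and P_1, ..., P_t points such that for every pair (i, j), the minimum bounding rectangle of {P_i, P_j} has minimum distance to P_q greater than theta. Then the minimum bounding rectangle of the entire set {P_1, ..., P_t} also has minimum distance to P_q greater than theta. -/
noncomputable def dstMin {d : ℕ} (P l u : EuclideanSpace ℝ (Fin d)) : ℝ :=
  Real.sqrt (∑ i, max (l i - P i) (max 0 (P i - u i)) ^ 2)

private lemma fkey (q l u a b : ℝ) (hla : l ≤ a) (hlb : l ≤ b) (hau : a ≤ u) (hbu : b ≤ u)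
    (h : (a = l ∧ q < l) ∨ (b = l ∧ q < l) ∨ (a = u ∧ u < q) ∨ (b = u ∧ u < q) ∨
      (min a b ≤ q ∧ q ≤ max a b)) :
    max (min a b - q) (max 0 (q - max a b)) ≤ max (l - q) (max 0 (q - u)) := by
  have h0 : (0:ℝ) ≤ max (l - q) (max 0 (q - u)) :=
    le_trans (le_max_left 0 (q - u)) (le_max_right _ _)
  have h1 : l - q ≤ max (l - q) (max 0 (q - u)) := le_max_left _ _
  have h2 : q - u ≤ max (l - q) (max 0 (q - u)) :=
    le_trans (le_max_right 0 (q - u)) (le_max_right _ _)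
  have hm1 : min a b ≤ a := min_le_left _ _
  have hm2 : min a b ≤ b := min_le_right _ _
  have hm3 : a ≤ max a b := le_max_left _ _
  have hm4 : b ≤ max a b := le_max_right _ _
  have hl : l ≤ min a b := le_min hla hlb
  apply max_le
  · rcases h with ⟨h,h'⟩|⟨h,h'⟩|⟨h,h'⟩|⟨h,h'⟩|⟨h,h'⟩ <;> linarith
  · apply max_le h0
    rcases h with ⟨h,h'⟩|⟨h,h'⟩|⟨h,h'⟩|⟨h,h'⟩|⟨h,h'⟩ <;> linarith

private lemma dst_mono {d : ℕ} (q l u l' u' : EuclideanSpace ℝ (Fin d))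
    (h : ∀ c, max (l' c - q c) (max 0 (q c - u' c)) ≤ max (l c - q c) (max 0 (q c - u c))) :
    dstMin q l' u' ≤ dstMin q l u := by
  apply Real.sqrt_le_sqrt
  apply Finset.sum_le_sum
  intro c _
  have h0 : (0:ℝ) ≤ max (l' c - q c) (max 0 (q c - u' c)) :=
    le_trans (le_max_left 0 _) (le_max_right _ _)
  exact pow_le_pow_left₀ h0 (h c) 2

/-- Clique-to-DBH theorem in dimension 2: if every pairwise minimum bounding
rectangle of a finite family of points is at distance `> θ` from `P_q`, then so
is the minimum bounding rectangle of the whole family. -/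
theorem stmt_4 {ι : Type*} [Fintype ι] [Nonempty ι]
    (P_q : EuclideanSpace ℝ (Fin 2)) (P : ι → EuclideanSpace ℝ (Fin 2)) (θ : ℝ)
    (hpair : ∀ i j : ι,
      θ < dstMin P_q (WithLp.toLp 2 (fun c => min (P i c) (P j c))) (WithLp.toLp 2 (fun c => max (P i c) (P j c)))) :
    θ < dstMin P_q
      (WithLp.toLp 2 (fun c => Finset.univ.inf' Finset.univ_nonempty (fun k => P k c)))
      (WithLp.toLp 2 (fun c => Finset.univ.sup' Finset.univ_nonempty (fun k => P k c))) := by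
  classical
  set L : Fin 2 → ℝ := fun c => Finset.univ.inf' Finset.univ_nonempty (fun k => P k c) with hLdef
  set U : Fin 2 → ℝ := fun c => Finset.univ.sup' Finset.univ_nonempty (fun k => P k c) with hUdef
  have hLle : ∀ (k : ι) (c : Fin 2), L c ≤ P k c := fun k c => by
    rw [hLdef]; exact Finset.inf'_le _ (Finset.mem_univ k)
  have hUle : ∀ (k : ι) (c : Fin 2), P k c ≤ U c := fun k c => by
    rw [hUdef]; exact Finset.le_sup' (fun k => P k c) (Finset.mem_univ k)
  have key : ∀ (i j : ι) (c : Fin 2),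
      ((P i c = L c ∧ P_q c < L c) ∨ (P j c = L c ∧ P_q c < L c) ∨
       (P i c = U c ∧ U c < P_q c) ∨ (P j c = U c ∧ U c < P_q c) ∨
       (min (P i c) (P j c) ≤ P_q c ∧ P_q c ≤ max (P i c) (P j c))) →
      max (min (P i c) (P j c) - P_q c) (max 0 (P_q c - max (P i c) (P j c))) ≤
        max (L c - P_q c) (max 0 (P_q c - U c)) := fun i j c h =>
    fkey _ _ _ _ _ (hLle i c) (hLle j c) (hUle i c) (hUle j c) h
  suffices h : ∃ i j : ι, ∀ c : Fin 2,
      max (min (P i c) (P j c) - P_q c) (max 0 (P_q c - max (P i c) (P j c))) ≤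
      max (L c - P_q c) (max 0 (P_q c - U c)) by
    obtain ⟨i, j, hij⟩ := h
    exact lt_of_lt_of_le (hpair i j) (dst_mono _ _ _ _ _ hij)
  obtain ⟨A, -, hA⟩ := Finset.exists_mem_eq_inf' Finset.univ_nonempty (fun k => P k 0)
  obtain ⟨B, -, hB⟩ := Finset.exists_mem_eq_sup' Finset.univ_nonempty (fun k => P k 0)
  obtain ⟨C, -, hC⟩ := Finset.exists_mem_eq_inf' Finset.univ_nonempty (fun k => P k 1)
  obtain ⟨D, -, hD⟩ := Finset.exists_mem_eq_sup' Finset.univ_nonempty (fun k => P k 1)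
  have hA' : P A 0 = L 0 := hA.symm
  have hB' : P B 0 = U 0 := hB.symm
  have hC' : P C 1 = L 1 := hC.symm
  have hD' : P D 1 = U 1 := hD.symm
  have hLA : L 0 ≤ P A 0 := le_of_eq hA
  rcases lt_or_ge (P_q 0) (L 0) with h0 | h0l
  · -- q left of box in coord 0 : use A for coord 0
    rcases lt_or_ge (P_q 1) (L 1) with h1 | h1l
    · exact ⟨A, C, fun c => by
        fin_cases c
        · exact key A C 0 (Or.inl ⟨hA', h0⟩)
        · exact key A C 1 (Or.inr (Or.inl ⟨hC', h1⟩))⟩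
    rcases lt_or_ge (U 1) (P_q 1) with h1 | h1u
    · exact ⟨A, D, fun c => by
        fin_cases c
        · exact key A D 0 (Or.inl ⟨hA', h0⟩)
        · exact key A D 1 (Or.inr (Or.inr (Or.inr (Or.inl ⟨hD', h1⟩))))⟩
    -- inside in coord 1
    rcases le_total (P A 1) (P_q 1) with hA1 | hA1
    · exact ⟨A, D, fun c => by
        fin_cases c
        · exact key A D 0 (Or.inl ⟨hA', h0⟩)
        · exact key A D 1 (Or.inr (Or.inr (Or.inr (Or.inr
            ⟨le_trans (min_le_left _ _) hA1, le_trans h1u (hD' ▸ le_max_right _ _)⟩))))⟩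
    · exact ⟨A, C, fun c => by
        fin_cases c
        · exact key A C 0 (Or.inl ⟨hA', h0⟩)
        · exact key A C 1 (Or.inr (Or.inr (Or.inr (Or.inr
            ⟨le_trans (min_le_right _ _) (hC' ▸ h1l), le_trans hA1 (le_max_left _ _)⟩))))⟩
  rcases lt_or_ge (U 0) (P_q 0) with h0 | h0u
  · -- q right of box in coord 0 : use B for coord 0
    rcases lt_or_ge (P_q 1) (L 1) with h1 | h1l
    · exact ⟨B, C, fun c => by
        fin_cases c
        · exact key B C 0 (Or.inr (Or.inr (Or.inl ⟨hB', h0⟩)))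
        · exact key B C 1 (Or.inr (Or.inl ⟨hC', h1⟩))⟩
    rcases lt_or_ge (U 1) (P_q 1) with h1 | h1u
    · exact ⟨B, D, fun c => by
        fin_cases c
        · exact key B D 0 (Or.inr (Or.inr (Or.inl ⟨hB', h0⟩)))
        · exact key B D 1 (Or.inr (Or.inr (Or.inr (Or.inl ⟨hD', h1⟩))))⟩
    rcases le_total (P B 1) (P_q 1) with hB1 | hB1
    · exact ⟨B, D, fun c => by
        fin_cases c
        · exact key B D 0 (Or.inr (Or.inr (Or.inl ⟨hB', h0⟩)))
        · exact key B D 1 (Or.inr (Or.inr (Or.inr (Or.inr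
            ⟨le_trans (min_le_left _ _) hB1, le_trans h1u (hD' ▸ le_max_right _ _)⟩))))⟩
    · exact ⟨B, C, fun c => by
        fin_cases c
        · exact key B C 0 (Or.inr (Or.inr (Or.inl ⟨hB', h0⟩)))
        · exact key B C 1 (Or.inr (Or.inr (Or.inr (Or.inr
            ⟨le_trans (min_le_right _ _) (hC' ▸ h1l), le_trans hB1 (le_max_left _ _)⟩))))⟩
  -- inside in coord 0
  rcases lt_or_ge (P_q 1) (L 1) with h1 | h1l
  · -- q below box in coord 1 : use C for coord 1, cover coord 0
    rcases le_total (P C 0) (P_q 0) with hC0 | hC0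
    · exact ⟨C, B, fun c => by
        fin_cases c
        · exact key C B 0 (Or.inr (Or.inr (Or.inr (Or.inr
            ⟨le_trans (min_le_left _ _) hC0, le_trans h0u (hB' ▸ le_max_right _ _)⟩))))
        · exact key C B 1 (Or.inl ⟨hC', h1⟩)⟩
    · exact ⟨C, A, fun c => by
        fin_cases c
        · exact key C A 0 (Or.inr (Or.inr (Or.inr (Or.inr
            ⟨le_trans (min_le_right _ _) (hA' ▸ h0l), le_trans hC0 (le_max_left _ _)⟩))))
        · exact key C A 1 (Or.inl ⟨hC', h1⟩)⟩
  rcases lt_or_ge (U 1) (P_q 1) with h1 | h1u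
  · -- q above box in coord 1 : use D for coord 1, cover coord 0
    rcases le_total (P D 0) (P_q 0) with hD0 | hD0
    · exact ⟨D, B, fun c => by
        fin_cases c
        · exact key D B 0 (Or.inr (Or.inr (Or.inr (Or.inr
            ⟨le_trans (min_le_left _ _) hD0, le_trans h0u (hB' ▸ le_max_right _ _)⟩))))
        · exact key D B 1 (Or.inr (Or.inr (Or.inl ⟨hD', h1⟩)))⟩
    · exact ⟨D, A, fun c => by
        fin_cases c
        · exact key D A 0 (Or.inr (Or.inr (Or.inr (Or.inr
            ⟨le_trans (min_le_right _ _) (hA' ▸ h0l), le_trans hD0 (le_max_left _ _)⟩))))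
        · exact key D A 1 (Or.inr (Or.inr (Or.inl ⟨hD', h1⟩)))⟩
  -- inside the box in both coordinates : need a pair covering q in both coords
  rcases le_total (P C 0) (P_q 0) with hC0 | hC0
  · rcases le_total (P_q 0) (P D 0) with hD0 | hD0
    · -- pair (C, D) covers coord 0 and coord 1
      exact ⟨C, D, fun c => by
        fin_cases c
        · exact key C D 0 (Or.inr (Or.inr (Or.inr (Or.inr
            ⟨le_trans (min_le_left _ _) hC0, le_trans hD0 (le_max_right _ _)⟩))))
        · exact key C D 1 (Or.inr (Or.inr (Or.inr (Or.inr
            ⟨le_trans (min_le_left _ _) (hC' ▸ h1l), le_trans h1u (hD' ▸ le_max_right _ _)⟩))))⟩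
    · -- P C 0 ≤ q0 and P D 0 ≤ q0 : both on the left; use B on the right
      rcases le_total (P_q 1) (P B 1) with hB1 | hB1
      · exact ⟨C, B, fun c => by
          fin_cases c
          · exact key C B 0 (Or.inr (Or.inr (Or.inr (Or.inr
              ⟨le_trans (min_le_left _ _) hC0, le_trans h0u (hB' ▸ le_max_right _ _)⟩))))
          · exact key C B 1 (Or.inr (Or.inr (Or.inr (Or.inr
              ⟨le_trans (min_le_left _ _) (hC' ▸ h1l), le_trans hB1 (le_max_right _ _)⟩))))⟩
      · exact ⟨B, D, fun c => by
          fin_cases c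
          · exact key B D 0 (Or.inr (Or.inr (Or.inr (Or.inr
              ⟨le_trans (min_le_right _ _) hD0, le_trans h0u (hB' ▸ le_max_left _ _)⟩))))
          · exact key B D 1 (Or.inr (Or.inr (Or.inr (Or.inr
              ⟨le_trans (min_le_left _ _) hB1, le_trans h1u (hD' ▸ le_max_right _ _)⟩))))⟩
  · rcases le_total (P D 0) (P_q 0) with hD0 | hD0
    · -- P D 0 ≤ q0 ≤ P C 0 : pair (D, C) covers coord 0
      exact ⟨D, C, fun c => by
        fin_cases c
        · exact key D C 0 (Or.inr (Or.inr (Or.inr (Or.inr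
            ⟨le_trans (min_le_left _ _) hD0, le_trans hC0 (le_max_right _ _)⟩))))
        · exact key D C 1 (Or.inr (Or.inr (Or.inr (Or.inr
            ⟨le_trans (min_le_right _ _) (hC' ▸ h1l), le_trans h1u (hD' ▸ le_max_left _ _)⟩))))⟩
    · -- q0 ≤ P C 0 and q0 ≤ P D 0 : both on the right; use A on the left
      rcases le_total (P_q 1) (P A 1) with hA1 | hA1
      · exact ⟨C, A, fun c => by
          fin_cases c
          · exact key C A 0 (Or.inr (Or.inr (Or.inr (Or.inr
              ⟨le_trans (min_le_right _ _) (hA' ▸ h0l), le_trans hC0 (le_max_left _ _)⟩))))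
          · exact key C A 1 (Or.inr (Or.inr (Or.inr (Or.inr
              ⟨le_trans (min_le_left _ _) (hC' ▸ h1l), le_trans hA1 (le_max_right _ _)⟩))))⟩
      · exact ⟨A, D, fun c => by
          fin_cases c
          · exact key A D 0 (Or.inr (Or.inr (Or.inr (Or.inr
              ⟨le_trans (min_le_left _ _) (hA' ▸ h0l), le_trans hD0 (le_max_right _ _)⟩))))
          · exact key A D 1 (Or.inr (Or.inr (Or.inr (Or.inr
              ⟨le_trans (min_le_left _ _) hA1, le_trans h1u (hD' ▸ le_max_right _ _)⟩))))⟩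
end

section
/- The clique-to-DBH property fails in dimension d >= 3: there exist a query point P_q, a threshold theta > 0, and three points v_i, v_j, v_k in R^3 such that the minimum bounding hyper-rectangles of each pair {v_i,v_j}, {v_i,v_k}, {v_j,v_k} all have minimum distance to P_q greater than theta, yet the minimum bounding hyper-rectangle of {v_i, v_j, v_k} has minimum distance to P_q at most theta. -/
/-- The clique-to-DBH property fails in dimension 3: there is a counterexample
where all three pairwise MBHs are DBHs but the MBH of the triple is not. -/
theorem stmt_5 :
    ∃ (P_q vi vj vk : EuclideanSpace ℝ (Fin 3)) (θ : ℝ), 0 < θ ∧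
      (θ < dstMin P_q (WithLp.toLp 2 (fun c => min (vi c) (vj c))) (WithLp.toLp 2 (fun c => max (vi c) (vj c)))) ∧
      (θ < dstMin P_q (WithLp.toLp 2 (fun c => min (vi c) (vk c))) (WithLp.toLp 2 (fun c => max (vi c) (vk c)))) ∧
      (θ < dstMin P_q (WithLp.toLp 2 (fun c => min (vj c) (vk c))) (WithLp.toLp 2 (fun c => max (vj c) (vk c)))) ∧
      dstMin P_q (WithLp.toLp 2 (fun c => min (vi c) (min (vj c) (vk c))))
        (WithLp.toLp 2 (fun c => max (vi c) (max (vj c) (vk c)))) ≤ θ := by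
  refine ⟨WithLp.toLp 2 (fun _ => 0), WithLp.toLp 2 ![1, 1, -1], WithLp.toLp 2 ![1, -1, 1], WithLp.toLp 2 ![-1, 1, 1], 1/2, by norm_num, ?_, ?_, ?_, ?_⟩ <;>
  · simp only [dstMin, Fin.sum_univ_three, PiLp.toLp_apply]
    norm_num [Matrix.cons_val_zero, Matrix.cons_val_one, Matrix.head_cons, Matrix.cons_val_two,
      Matrix.tail_cons]
end
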